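/- arXiv:1907.13563 — 3 statements merged into one kernel-verified Lean document; each statement's English description precedes it below -/
import Mathlib

section
/- Define D(z) = r(-z)² - z·r(-z), where r(t) = φ(t)/Φ(t) is the standard normal inverse Mills ratio. Then 0 < D(z) < 1 for all real z. -/
open Real MeasureTheory Filter Set Topology

noncomputable def phi (t : ℝ) : ℝ := (Real.sqrt (2 * Real.pi))⁻¹ * Real.exp (-t ^ 2 / 2)

noncomputable def Phi (t : ℝ) : ℝ := ∫ u in Set.Iic t, phi u

noncomputable def millsR (t : ℝ) : ℝ := phi t / Phi t

noncomputable def Dfun (z : ℝ) : ℝ := millsR (-z) ^ 2 - z * millsR (-z)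

lemma phi_pos (t : ℝ) : 0 < phi t := by
  have : (0:ℝ) < Real.sqrt (2 * Real.pi) := Real.sqrt_pos.2 (by positivity)
  exact mul_pos (inv_pos.2 this) (Real.exp_pos _)

lemma phi_even (t : ℝ) : phi (-t) = phi t := by simp [phi]

lemma continuous_phi : Continuous phi := by
  unfold phi; continuity

lemma integrable_phi : Integrable phi := by
  have h : Integrable (fun u : ℝ => Real.exp (-(1/2) * u ^ 2)) :=
    integrable_exp_neg_mul_sq (by norm_num)
  have : (fun u : ℝ => Real.exp (-u ^ 2 / 2)) = fun u => Real.exp (-(1/2) * u ^ 2) := by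
    funext u; ring_nf
  exact ((this ▸ h).const_mul _)

lemma integrable_mul_phi : Integrable (fun u => u * phi u) := by
  have hb : Integrable (fun u : ℝ => Real.exp (-(1/4) * u ^ 2)) :=
    integrable_exp_neg_mul_sq (by norm_num)
  have hb2 := hb.const_mul ((Real.sqrt (2 * Real.pi))⁻¹)
  refine hb2.mono' (continuous_id.mul continuous_phi).aestronglyMeasurable ?_
  filter_upwards with u
  have hc : (0:ℝ) ≤ (Real.sqrt (2 * Real.pi))⁻¹ := by positivity
  have key : |u| * Real.exp (-u^2/2) ≤ Real.exp (-(1/4) * u^2) := by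
    have h1 : |u| ≤ Real.exp (u^2/4) := by
      calc |u| ≤ 1 + |u|^2/4 := by nlinarith [sq_nonneg (|u| - 2)]
        _ ≤ Real.exp (u^2/4) := by
            have := Real.add_one_le_exp (u^2/4)
            rw [sq_abs]; linarith
    calc |u| * Real.exp (-u^2/2) ≤ Real.exp (u^2/4) * Real.exp (-u^2/2) := by
          exact mul_le_mul_of_nonneg_right h1 (Real.exp_pos _).le
      _ = Real.exp (-(1/4) * u^2) := by rw [← Real.exp_add]; ring_nf
  calc ‖u * phi u‖ = |u| * phi u := by
        rw [norm_mul, Real.norm_eq_abs, Real.norm_eq_abs, abs_of_pos (phi_pos u)]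
    _ = (Real.sqrt (2 * Real.pi))⁻¹ * (|u| * Real.exp (-u^2/2)) := by unfold phi; ring
    _ ≤ (Real.sqrt (2 * Real.pi))⁻¹ * Real.exp (-(1/4) * u^2) :=
        mul_le_mul_of_nonneg_left key hc

lemma hasDerivAt_phi (t : ℝ) : HasDerivAt phi (-t * phi t) t := by
  have h1 : HasDerivAt (fun t : ℝ => -t^2/2) (-t) t := by
    have := ((hasDerivAt_pow 2 t).neg).div_const 2
    simpa using this.congr_deriv (by ring)
  have h2 := (h1.exp).const_mul ((Real.sqrt (2 * Real.pi))⁻¹)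
  exact h2.congr_deriv (by unfold phi; ring)

-- limit lemmas
lemma tendsto_sq_exp : Tendsto (fun z : ℝ => z^2 * Real.exp (-z^2/2)) atTop (𝓝 0) := by
  have h1 : Tendsto (fun x : ℝ => x ^ 1 * Real.exp (-x)) atTop (𝓝 0) :=
    tendsto_pow_mul_exp_neg_atTop_nhds_zero 1
  have h2 : Tendsto (fun z : ℝ => z^2/2) atTop atTop := by
    apply Tendsto.atTop_div_const (by norm_num)
    exact tendsto_pow_atTop (by norm_num)
  have h3 := (h1.comp h2).const_mul (2:ℝ)
  simp only [mul_zero] at h3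
  refine h3.congr fun z => ?_
  simp only [Function.comp, pow_one]
  ring_nf

lemma tendsto_one_exp : Tendsto (fun z : ℝ => Real.exp (-z^2/2)) atTop (𝓝 0) := by
  refine squeeze_zero' ?_ ?_ tendsto_sq_exp
  · filter_upwards with z using (Real.exp_pos _).le
  · filter_upwards [eventually_ge_atTop (1:ℝ)] with z hz
    have h := mul_nonneg (by nlinarith : (0:ℝ) ≤ z^2 - 1) (Real.exp_pos (-z^2/2)).le
    nlinarith

lemma tendsto_id_exp : Tendsto (fun z : ℝ => z * Real.exp (-z^2/2)) atTop (𝓝 0) := by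
  refine squeeze_zero' ?_ ?_ tendsto_sq_exp
  · filter_upwards [eventually_ge_atTop (0:ℝ)] with z hz
    positivity
  · filter_upwards [eventually_ge_atTop (1:ℝ)] with z hz
    have h := mul_nonneg (by nlinarith : (0:ℝ) ≤ z^2 - z) (Real.exp_pos (-z^2/2)).le
    nlinarith

lemma tendsto_phi_atTop : Tendsto (fun z => phi z) atTop (𝓝 0) := by
  have := tendsto_one_exp.const_mul ((Real.sqrt (2 * Real.pi))⁻¹)
  simpa [phi] using this

lemma tendsto_mul_phi_atTop : Tendsto (fun z => z * phi z) atTop (𝓝 0) := by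
  have := tendsto_id_exp.const_mul ((Real.sqrt (2 * Real.pi))⁻¹)
  simp only [mul_zero] at this
  refine this.congr fun z => ?_
  unfold phi; ring

lemma tendsto_sq_phi_atTop : Tendsto (fun z => z^2 * phi z) atTop (𝓝 0) := by
  have := tendsto_sq_exp.const_mul ((Real.sqrt (2 * Real.pi))⁻¹)
  simp only [mul_zero] at this
  refine this.congr fun z => ?_
  unfold phi; ring

lemma tendsto_phi_atBot : Tendsto phi atBot (𝓝 0) := by
  have := tendsto_phi_atTop.comp tendsto_neg_atBot_atTop
  refine this.congr fun z => ?_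
  simp [Function.comp, phi_even]

-- Phi facts
lemma Phi_pos (t : ℝ) : 0 < Phi t := by
  rw [Phi]
  rw [setIntegral_pos_iff_support_of_nonneg_ae
    (Filter.Eventually.of_forall fun x => (phi_pos x).le) integrable_phi.integrableOn]
  have : Function.support phi = Set.univ := by
    ext x; simp [Function.mem_support, (phi_pos x).ne']
  rw [this, Set.univ_inter]
  simp

lemma hasDerivAt_Phi (t : ℝ) : HasDerivAt Phi (phi t) t := by
  have h1 : ∀ s : ℝ, Phi s = Phi 0 + ∫ u in (0:ℝ)..s, phi u := by
    intro s
    have := intervalIntegral.integral_Iic_sub_Iic (μ := volume) (f := phi)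
      integrable_phi.integrableOn integrable_phi.integrableOn (a := 0) (b := s)
    rw [Phi, Phi]; linarith
  have h2 : HasDerivAt (fun s => Phi 0 + ∫ u in (0:ℝ)..s, phi u) (phi t) t := by
    refine HasDerivAt.const_add _ ?_
    exact intervalIntegral.integral_hasDerivAt_right
      (integrable_phi.intervalIntegrable)
      (continuous_phi.stronglyMeasurableAtFilter _ _)
      continuous_phi.continuousAt
  exact h2.congr_of_eventuallyEq (Filter.Eventually.of_forall fun s => h1 s)

lemma Phi_le_phi {a : ℝ} (ha : a ≤ -1) : Phi a ≤ phi a := by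
  have hint : IntegrableOn (fun u => -u * phi u) (Set.Iic a) := by
    have := integrable_mul_phi.neg
    refine (this.congr ?_).integrableOn
    filter_upwards with u
    simp only [Pi.neg_apply]; ring
  have heq : ∫ u in Set.Iic a, (-u * phi u) = phi a := by
    have := integral_Iic_of_hasDerivAt_of_tendsto (f := phi) (f' := fun u => -u * phi u)
      (a := a) (m := 0)
      (continuous_phi.continuousWithinAt)
      (fun x _ => hasDerivAt_phi x) hint tendsto_phi_atBot
    simpa using this
  calc Phi a ≤ ∫ u in Set.Iic a, (-u * phi u) := by
        refine setIntegral_mono_on integrable_phi.integrableOn hint measurableSet_Iic ?_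
        intro u hu
        have h1 : (1:ℝ) ≤ -u := by simp only [Set.mem_Iic] at hu; linarith
        nlinarith [phi_pos u]
    _ = phi a := heq

lemma tendsto_Phi_neg_atTop : Tendsto (fun z => Phi (-z)) atTop (𝓝 0) := by
  refine squeeze_zero' ?_ ?_ tendsto_phi_atTop
  · filter_upwards with z using (Phi_pos _).le
  · filter_upwards [eventually_ge_atTop (1:ℝ)] with z hz
    have := Phi_le_phi (a := -z) (by linarith)
    rwa [phi_even] at this

lemma tendsto_mul_Phi_neg_atTop : Tendsto (fun z => z * Phi (-z)) atTop (𝓝 0) := by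
  refine squeeze_zero' ?_ ?_ tendsto_mul_phi_atTop
  · filter_upwards [eventually_ge_atTop (0:ℝ)] with z hz
    exact mul_nonneg hz (Phi_pos _).le
  · filter_upwards [eventually_ge_atTop (1:ℝ)] with z hz
    have h := Phi_le_phi (a := -z) (by linarith)
    rw [phi_even] at h
    exact mul_le_mul_of_nonneg_left h (by linarith)

lemma tendsto_sq_mul_Phi_neg_atTop : Tendsto (fun z => z^2 * Phi (-z)) atTop (𝓝 0) := by
  refine squeeze_zero' ?_ ?_ tendsto_sq_phi_atTop
  · filter_upwards with z using mul_nonneg (sq_nonneg z) (Phi_pos _).le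
  · filter_upwards [eventually_ge_atTop (1:ℝ)] with z hz
    have h := Phi_le_phi (a := -z) (by linarith)
    rw [phi_even] at h
    exact mul_le_mul_of_nonneg_left h (sq_nonneg z)

-- generic positivity lemma
lemma pos_of_strictAnti_tendsto {f : ℝ → ℝ} (hf : StrictAnti f)
    (h0 : Tendsto f atTop (𝓝 0)) (z : ℝ) : 0 < f z := by
  have h1 : 0 ≤ f (z + 1) := by
    refine le_of_tendsto h0 ?_
    filter_upwards [eventually_ge_atTop (z + 1)] with x hx
    exact hf.antitone hx
  have h2 : f (z + 1) < f z := hf (by linarith)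
  linarith

lemma hasDerivAt_Phi_neg (z : ℝ) : HasDerivAt (fun z => Phi (-z)) (-phi z) z := by
  have := (hasDerivAt_Phi (-z)).comp z (hasDerivAt_neg z)
  simpa [phi_even, Function.comp_def] using this

-- F z = phi z - z * Phi (-z) > 0
lemma F_pos (z : ℝ) : 0 < phi z - z * Phi (-z) := by
  refine pos_of_strictAnti_tendsto (f := fun z => phi z - z * Phi (-z)) ?_ ?_ z
  · apply strictAnti_of_deriv_neg
    intro x
    have h : HasDerivAt (fun z => phi z - z * Phi (-z)) (-Phi (-x)) x := by
      have h1 := (hasDerivAt_phi x).sub ((hasDerivAt_id x).mul (hasDerivAt_Phi_neg x))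
      exact h1.congr_deriv (by simp only [id_eq]; ring)
    rw [h.deriv]
    simpa using (Phi_pos (-x))
  · have := tendsto_phi_atTop.sub tendsto_mul_Phi_neg_atTop
    simpa using this

-- M z = (1+z^2) * Phi (-z) - z * phi z > 0
lemma M_pos (z : ℝ) : 0 < (1 + z^2) * Phi (-z) - z * phi z := by
  refine pos_of_strictAnti_tendsto (f := fun z => (1 + z^2) * Phi (-z) - z * phi z) ?_ ?_ z
  · apply strictAnti_of_deriv_neg
    intro x
    have h : HasDerivAt (fun z => (1 + z^2) * Phi (-z) - z * phi z)
        (-(2 * (phi x - x * Phi (-x)))) x := by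
      have hp : HasDerivAt (fun z : ℝ => 1 + z^2) (2*x) x := by
        have := (hasDerivAt_pow 2 x).const_add (1:ℝ)
        simpa using this
      have h1 := (hp.mul (hasDerivAt_Phi_neg x)).sub
        ((hasDerivAt_id x).mul (hasDerivAt_phi x))
      exact h1.congr_deriv (by simp only [id_eq]; ring)
    rw [h.deriv]
    have := F_pos x
    linarith
  · have h1 := tendsto_Phi_neg_atTop.add tendsto_sq_mul_Phi_neg_atTop
    have h2 := h1.sub tendsto_mul_phi_atTop
    simp only [add_zero, sub_zero] at h2
    refine h2.congr fun z => ?_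
    ring

-- G z = Phi(-z)^2 + z * phi z * Phi(-z) - phi z^2 > 0
lemma G_pos (z : ℝ) : 0 < Phi (-z)^2 + z * phi z * Phi (-z) - phi z ^ 2 := by
  refine pos_of_strictAnti_tendsto
    (f := fun z => Phi (-z)^2 + z * phi z * Phi (-z) - phi z ^ 2) ?_ ?_ z
  · apply strictAnti_of_deriv_neg
    intro x
    have h : HasDerivAt (fun z => Phi (-z)^2 + z * phi z * Phi (-z) - phi z ^ 2)
        (-(phi x * ((1 + x^2) * Phi (-x) - x * phi x))) x := by
      have hP2 : HasDerivAt (fun z => Phi (-z)^2) (2 * Phi (-x) * (-phi x)) x := by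
        have := (hasDerivAt_pow 2 (Phi (-x))).comp x (hasDerivAt_Phi_neg x)
        simpa [Function.comp_def] using this.congr_deriv (by ring)
      have hph2 : HasDerivAt (fun z => phi z ^ 2) (2 * phi x * (-x * phi x)) x := by
        have := (hasDerivAt_pow 2 (phi x)).comp x (hasDerivAt_phi x)
        simpa [Function.comp_def] using this.congr_deriv (by ring)
      have hmid : HasDerivAt (fun z => z * phi z * Phi (-z))
          ((phi x + x * (-x * phi x)) * Phi (-x) + x * phi x * (-phi x)) x :=
        (((hasDerivAt_id x).mul (hasDerivAt_phi x)).mul (hasDerivAt_Phi_neg x)).congr_deriv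
          (by simp only [id_eq, Pi.mul_apply]; ring)
      have h1 := (hP2.add hmid).sub hph2
      exact h1.congr_deriv (by ring)
    rw [h.deriv]
    have h1 := M_pos x
    have h2 := phi_pos x
    have := mul_pos h2 h1
    linarith
  · have h1 := (tendsto_Phi_neg_atTop.mul tendsto_Phi_neg_atTop).add
      (tendsto_mul_phi_atTop.mul tendsto_Phi_neg_atTop)
    have h2 := h1.sub (tendsto_phi_atTop.mul tendsto_phi_atTop)
    simp only [mul_zero, add_zero, sub_zero] at h2
    refine h2.congr fun z => ?_
    ring

/-- `0 < D z < 1` for all real `z`. -/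
theorem Dfun_mem_Ioo (z : ℝ) : 0 < Dfun z ∧ Dfun z < 1 := by
  have hP : 0 < Phi (-z) := Phi_pos (-z)
  have hp : 0 < phi z := phi_pos z
  have hD : Dfun z = (phi z ^ 2 - z * phi z * Phi (-z)) / Phi (-z) ^ 2 := by
    unfold Dfun millsR
    rw [phi_even]
    field_simp
  constructor
  · rw [hD]
    apply div_pos _ (by positivity)
    have hF := F_pos z
    nlinarith
  · rw [hD, div_lt_one (by positivity)]
    have hG := G_pos z
    nlinarith
end

section
/- The pMOM marginal prior density π_M(β) = C · β² / (1 + β²/(g b))^{(a+3)/2}, with C = 2Γ((a+3)/2)/(Γ(a/2)√π (bg)^{3/2}), has tails proportional to a Student-t density with a degrees of freedom when a = b: lim_{β→∞} π_M(β)/t(β; a) exists and is a finite positive constant, where t(·;a) is the Student-t density with a degrees of freedom. -/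
open Real

/-- With `a = b`, the marginal pMOM prior density has tails proportional to a
Student-t density with `a` degrees of freedom: the ratio tends to a finite
positive constant as `β → ∞`. -/
theorem pMOM_marginal_student_tails
    (a g : ℝ) (ha : 0 < a) (hg : 0 < g)
    (C : ℝ) (hC : C = 2 * Real.Gamma ((a + 3) / 2) /
      (Real.Gamma (a / 2) * Real.sqrt Real.pi * (a * g) ^ ((3 : ℝ) / 2)))
    (piM : ℝ → ℝ)
    (hpiM : ∀ β : ℝ, piM β = C * β ^ 2 * (1 + β ^ 2 / (g * a)) ^ (-((a + 3) / 2)))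
    (tdens : ℝ → ℝ)
    (htdens : ∀ β : ℝ, tdens β = Real.Gamma ((a + 1) / 2) /
      (Real.sqrt (a * Real.pi) * Real.Gamma (a / 2)) *
        (1 + β ^ 2 / a) ^ (-((a + 1) / 2))) :
    ∃ L : ℝ, 0 < L ∧
      Filter.Tendsto (fun β => piM β / tdens β) Filter.atTop (nhds L) := by
  set p : ℝ := (a + 3) / 2 with hp
  set q : ℝ := (a + 1) / 2 with hq
  set K : ℝ := Real.Gamma ((a + 1) / 2) /
      (Real.sqrt (a * Real.pi) * Real.Gamma (a / 2)) with hK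
  have hCpos : 0 < C := by
    rw [hC]
    have h1 : 0 < Real.Gamma ((a + 3) / 2) := Real.Gamma_pos_of_pos (by linarith)
    have h2 : 0 < Real.Gamma (a / 2) := Real.Gamma_pos_of_pos (by linarith)
    positivity
  have hKpos : 0 < K := by
    rw [hK]
    have h1 : 0 < Real.Gamma ((a + 1) / 2) := Real.Gamma_pos_of_pos (by linarith)
    have h2 : 0 < Real.Gamma (a / 2) := Real.Gamma_pos_of_pos (by linarith)
    positivity
  have hga : (0:ℝ) < g * a := mul_pos hg ha
  set L : ℝ := C * (g * a) ^ p / (K * a ^ q) with hL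
  have hLpos : 0 < L := by
    rw [hL]
    positivity
  refine ⟨L, hLpos, ?_⟩
  -- limit of the model function
  have hx2 : Filter.Tendsto (fun β : ℝ => β ^ 2) Filter.atTop Filter.atTop :=
    Filter.tendsto_pow_atTop two_ne_zero
  have base : ∀ c : ℝ, Filter.Tendsto (fun β : ℝ => 1 + c / β ^ 2)
      Filter.atTop (nhds 1) := by
    intro c
    have h0 : Filter.Tendsto (fun β : ℝ => c / β ^ 2) Filter.atTop (nhds 0) :=
      Filter.Tendsto.div_atTop tendsto_const_nhds hx2
    simpa using (tendsto_const_nhds.add h0)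
  have t1 : Filter.Tendsto (fun β : ℝ => (1 + g * a / β ^ 2) ^ (-p))
      Filter.atTop (nhds 1) := by
    have := (base (g * a)).rpow (tendsto_const_nhds (x := -p)) (Or.inl one_ne_zero)
    simpa using this
  have t2 : Filter.Tendsto (fun β : ℝ => (1 + a / β ^ 2) ^ q)
      Filter.atTop (nhds 1) := by
    have := (base a).rpow (tendsto_const_nhds (x := q)) (Or.inl one_ne_zero)
    simpa using this
  have tmodel : Filter.Tendsto
      (fun β : ℝ => L * (1 + g * a / β ^ 2) ^ (-p) * (1 + a / β ^ 2) ^ q)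
      Filter.atTop (nhds L) := by
    have := (tendsto_const_nhds (x := L)).mul t1 |>.mul t2
    simpa using this
  have heq : (fun β : ℝ => L * (1 + g * a / β ^ 2) ^ (-p) * (1 + a / β ^ 2) ^ q)
      =ᶠ[Filter.atTop] (fun β => piM β / tdens β) := by
    filter_upwards [Filter.eventually_ge_atTop (1:ℝ)] with β hβ
    have hb : (0:ℝ) < β := lt_of_lt_of_le one_pos hβ
    have hx : (0:ℝ) < β ^ 2 := by positivity
    have h1 : 1 + β ^ 2 / (g * a) = β ^ 2 / (g * a) * (1 + g * a / β ^ 2) := by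
      field_simp
      ring
    have h2 : 1 + β ^ 2 / a = β ^ 2 / a * (1 + a / β ^ 2) := by
      field_simp
      ring
    have eq1 : (1 + β ^ 2 / (g * a)) ^ (-p)
        = (β ^ 2) ^ (-p) / (g * a) ^ (-p) * (1 + g * a / β ^ 2) ^ (-p) := by
      rw [h1, Real.mul_rpow (by positivity) (by positivity),
        Real.div_rpow hx.le hga.le]
    have eq2 : (1 + β ^ 2 / a) ^ (-q)
        = (β ^ 2) ^ (-q) / a ^ (-q) * (1 + a / β ^ 2) ^ (-q) := by
      rw [h2, Real.mul_rpow (by positivity) (by positivity),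
        Real.div_rpow hx.le ha.le]
    have hxp : (β ^ 2 : ℝ) ^ (-p) = (β ^ 2) ^ (-q) * (β ^ 2)⁻¹ := by
      have : -p = -q + (-1) := by rw [hp, hq]; ring
      rw [this, Real.rpow_add hx, Real.rpow_neg_one]
    have eq3 : (1 + a / β ^ 2) ^ (-q) = ((1 + a / β ^ 2) ^ q)⁻¹ :=
      Real.rpow_neg (by positivity) q
    have hgap : (g * a) ^ (-p) = ((g * a) ^ p)⁻¹ := Real.rpow_neg hga.le p
    have haq : a ^ (-q) = (a ^ q)⁻¹ := Real.rpow_neg ha.le q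
    have hxq : (0:ℝ) < (β ^ 2 : ℝ) ^ (-q) := Real.rpow_pos_of_pos hx _
    have hBq : (0:ℝ) < (1 + a / β ^ 2) ^ q := Real.rpow_pos_of_pos (by positivity) _
    have hgap' : (0:ℝ) < (g * a) ^ p := Real.rpow_pos_of_pos hga _
    have haq' : (0:ℝ) < a ^ q := Real.rpow_pos_of_pos ha _
    rw [hpiM, htdens, eq1, eq2, eq3, hxp, hgap, haq, hL]
    field_simp
  exact Filter.Tendsto.congr' heq tmodel
end

section
/- Let f(α, τ) = -(1/2)Σᵢ(τ yᵢ - xᵢᵀα)² + n₀ log τ on ℝ^p × (0,∞). If the design matrix X with rows xᵢᵀ has full column rank and n₀ ≥ 1, then f is strictly concave in (α, τ). -/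
open Matrix

lemma aux_exists_dot_ne {n₀ p : ℕ} (y : Fin n₀ → ℝ) (x : Fin n₀ → (Fin p → ℝ))
    (hspan : Submodule.span ℝ
      (Set.range (fun i : Fin n₀ => Fin.cons (y i) (x i) : Fin n₀ → (Fin (p + 1) → ℝ))) = ⊤)
    (d : Fin p → ℝ) (hd : d ≠ 0) : ∃ i, x i ⬝ᵥ d ≠ 0 := by
  by_contra h
  push_neg at h
  let φ : (Fin (p + 1) → ℝ) →ₗ[ℝ] ℝ :=
    { toFun := fun w => Fin.tail w ⬝ᵥ d
      map_add' := by
        intro w w'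
        show Fin.tail (w + w') ⬝ᵥ d = Fin.tail w ⬝ᵥ d + Fin.tail w' ⬝ᵥ d
        have h : Fin.tail (w + w') = Fin.tail w + Fin.tail w' := rfl
        rw [h, add_dotProduct]
      map_smul' := by
        intro c w
        show Fin.tail (c • w) ⬝ᵥ d = c • (Fin.tail w ⬝ᵥ d)
        have h : Fin.tail (c • w) = c • Fin.tail w := rfl
        rw [h, smul_dotProduct] }
  have hsub : Set.range (fun i : Fin n₀ => Fin.cons (y i) (x i) : Fin n₀ → (Fin (p + 1) → ℝ))
      ⊆ (LinearMap.ker φ : Set (Fin (p + 1) → ℝ)) := by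
    rintro w ⟨i, rfl⟩
    have : φ (Fin.cons (y i) (x i)) = x i ⬝ᵥ d := by
      simp [φ, Fin.tail_cons]
    simpa [LinearMap.mem_ker, this] using h i
  have hker : LinearMap.ker φ = ⊤ := by
    rw [eq_top_iff, ← hspan, Submodule.span_le]
    exact hsub
  have : φ (Fin.cons 0 d) = 0 := by
    have := LinearMap.ker_eq_top.mp hker
    rw [this]; rfl
  have hdd : d ⬝ᵥ d = 0 := by simpa [φ, Fin.tail_cons] using this
  exact hd (dotProduct_self_eq_zero.mp hdd)

/-- Strict concavity of the uncensored Normal AFT log-likelihood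
`f(α, τ) = n₀ log τ - (1/2) Σᵢ (τ yᵢ - xᵢᵀ α)²` on `ℝ^p × (0, ∞)`,
provided the augmented vectors `(yᵢ, xᵢ)` span `ℝ^{p+1}`. -/
theorem normalAFT_uncensored_strictConcave
    (n₀ p : ℕ) (hn₀ : 1 ≤ n₀) (y : Fin n₀ → ℝ) (x : Fin n₀ → (Fin p → ℝ))
    (hspan : Submodule.span ℝ
      (Set.range (fun i : Fin n₀ => Fin.cons (y i) (x i) : Fin n₀ → (Fin (p + 1) → ℝ))) = ⊤) :
    StrictConcaveOn ℝ {q : (Fin p → ℝ) × ℝ | 0 < q.2}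
      (fun q : (Fin p → ℝ) × ℝ =>
        (n₀ : ℝ) * Real.log q.2 - (1 / 2) * ∑ i, (q.2 * y i - x i ⬝ᵥ q.1) ^ 2) := by
  constructor
  · intro q hq r hr a b ha hb hab
    simp only [Set.mem_setOf_eq] at hq hr ⊢
    have h2 : (a • q + b • r).2 = a * q.2 + b * r.2 := rfl
    rw [h2]
    rcases eq_or_lt_of_le ha with rfl | ha'
    · simp only [zero_mul, zero_add]
      have : b = 1 := by linarith
      nlinarith
    · nlinarith [mul_nonneg hb hr.le, mul_pos ha' hq]
  · intro q hq r hr hqr a b ha hb hab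
    simp only [Set.mem_setOf_eq] at hq hr
    have hb' : b = 1 - a := by linarith
    set u : Fin n₀ → ℝ := fun i => q.2 * y i - x i ⬝ᵥ q.1 with hu
    set v : Fin n₀ → ℝ := fun i => r.2 * y i - x i ⬝ᵥ r.1 with hv
    have h1 : (a • q + b • r).1 = a • q.1 + b • r.1 := rfl
    have h2 : (a • q + b • r).2 = a * q.2 + b * r.2 := rfl
    have hlin : ∀ i, (a • q + b • r).2 * y i - x i ⬝ᵥ (a • q + b • r).1
        = a * u i + b * v i := by
      intro i
      rw [h1, h2, dotProduct_add, dotProduct_smul, dotProduct_smul]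
      simp only [smul_eq_mul, hu, hv]
      ring
    have hterm : ∀ i, (a * u i + b * v i) ^ 2
        = a * u i ^ 2 + b * v i ^ 2 - a * b * (u i - v i) ^ 2 := by
      intro i
      rw [hb']
      ring
    have hsum : ∑ i, (a * u i + b * v i) ^ 2
        = a * ∑ i, u i ^ 2 + b * ∑ i, v i ^ 2 - a * b * ∑ i, (u i - v i) ^ 2 := by
      simp only [hterm, Finset.sum_sub_distrib, Finset.sum_add_distrib, Finset.mul_sum]
    have hpos2 : 0 < a * q.2 + b * r.2 := by positivity
    simp only [smul_eq_mul]
    have hfeq : ∑ i, ((a • q + b • r).2 * y i - x i ⬝ᵥ (a • q + b • r).1) ^ 2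
        = ∑ i, (a * u i + b * v i) ^ 2 :=
      Finset.sum_congr rfl fun i _ => by rw [hlin i]
    rw [hfeq, hsum, h2]
    have hSq : ∑ i, (q.2 * y i - x i ⬝ᵥ q.1) ^ 2 = ∑ i, u i ^ 2 := rfl
    have hSv : ∑ i, (r.2 * y i - x i ⬝ᵥ r.1) ^ 2 = ∑ i, v i ^ 2 := rfl
    rw [hSq, hSv]
    have hn : (1 : ℝ) ≤ (n₀ : ℝ) := by exact_mod_cast hn₀
    rcases eq_or_ne q.2 r.2 with heq | hne
    · -- strict from quadratic part
      have hd : q.1 ≠ r.1 := by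
        intro h
        exact hqr (Prod.ext h heq)
      have hd0 : q.1 - r.1 ≠ 0 := sub_ne_zero_of_ne hd
      obtain ⟨i0, hi0⟩ := aux_exists_dot_ne y x hspan _ hd0
      have huv : ∀ i, u i - v i = -(x i ⬝ᵥ (q.1 - r.1)) := by
        intro i
        simp only [hu, hv, dotProduct_sub, heq]
        ring
      have hqsum : 0 < ∑ i, (u i - v i) ^ 2 := by
        apply Finset.sum_pos'
        · intro i _; positivity
        · refine ⟨i0, Finset.mem_univ i0, ?_⟩
          have h' : 0 < |x i0 ⬝ᵥ (q.1 - r.1)| := abs_pos.mpr hi0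
          rw [huv i0, neg_sq, ← sq_abs]
          positivity
      have hsame : a * q.2 + b * r.2 = q.2 := by
        rw [heq, ← add_mul, hab, one_mul]
      have hlogeq : Real.log (a * q.2 + b * r.2) = Real.log q.2 := by
        rw [hsame]
      have hlog2 : Real.log r.2 = Real.log q.2 := by rw [heq]
      rw [hlogeq, hlog2]
      rw [hb']; nlinarith [mul_pos (mul_pos ha hb) hqsum, hb']
    · -- strict from log part
      have hlog := strictConcaveOn_log_Ioi.2 hq hr hne ha hb hab
      simp only [smul_eq_mul] at hlog
      have hqsum : 0 ≤ ∑ i, (u i - v i) ^ 2 := by positivity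
      nlinarith [hlog, mul_pos ha hb, mul_nonneg (mul_pos ha hb).le hqsum,
        mul_le_mul_of_nonneg_right (sub_nonneg.mpr hn)
          (sub_pos.mpr hlog).le, hb']
end
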